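/- For every 0 < σ < 2, n ≥ 1, y > 0 and λ > 0, the tail mass of the Cauchy–Poisson kernel satisfies ∫_{|x| ≥ λ} P^σ_y(x) dx ≤ 2^{(n+σ)/2} (λ/y)^{-σ}, where P^σ_y(x) = I(σ)^{-1} y^σ (y²+|x|²)^{-(n+σ)/2} and I(σ) = ω_n ∫₀^∞ (1+ρ²)^{-(n+σ)/2} ρ^{n-1} dρ. -/

import Mathlib

open MeasureTheory Real Filter Set

private lemma aux_pow_eq {n : ℕ} (hn : 1 ≤ n) {σ ρ : ℝ} (hρ : 0 < ρ) :
    (ρ^2) ^ (-((n:ℝ) + σ)/2) * ρ ^ (n-1) = ρ ^ (-1-σ) := by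
  rw [← Real.rpow_natCast ρ 2, ← Real.rpow_mul hρ.le, ← Real.rpow_natCast ρ (n-1),
    ← Real.rpow_add hρ, Nat.cast_sub hn, Nat.cast_one]
  congr 1
  push_cast
  ring

private lemma aux_le (n : ℕ) (hn : 1 ≤ n) {σ : ℝ} (hσ0 : 0 < σ) {c ρ : ℝ} (hc : 0 ≤ c)
    (hρ : 0 < ρ) :
    (c + ρ^2) ^ (-((n:ℝ) + σ)/2) * ρ ^ (n-1) ≤ ρ ^ (-1-σ) := by
  have hns : (0:ℝ) < (n:ℝ) + σ := by positivity
  have h1 : (c + ρ^2) ^ (-((n:ℝ) + σ)/2) ≤ (ρ^2) ^ (-((n:ℝ)+σ)/2) :=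
    Real.rpow_le_rpow_of_nonpos (by positivity) (by linarith) (by linarith)
  calc (c + ρ^2) ^ (-((n:ℝ) + σ)/2) * ρ ^ (n-1)
      ≤ (ρ^2) ^ (-((n:ℝ)+σ)/2) * ρ ^ (n-1) := by
        apply mul_le_mul_of_nonneg_right h1 (by positivity)
    _ = ρ ^ (-1-σ) := aux_pow_eq hn hρ

private lemma aux_ge (n : ℕ) (hn : 1 ≤ n) {σ : ℝ} (hσ0 : 0 < σ) {ρ : ℝ} (hρ : 1 ≤ ρ) :
    (2:ℝ) ^ (-((n:ℝ)+σ)/2) * ρ ^ (-1-σ) ≤ (1 + ρ^2) ^ (-((n:ℝ)+σ)/2) * ρ ^ (n-1) := by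
  have hρ0 : (0:ℝ) < ρ := lt_of_lt_of_le one_pos hρ
  have hns : (0:ℝ) < (n:ℝ) + σ := by positivity
  have h1 : (2 * ρ^2) ^ (-((n:ℝ)+σ)/2) ≤ (1 + ρ^2) ^ (-((n:ℝ)+σ)/2) := by
    apply Real.rpow_le_rpow_of_nonpos (by positivity) (by nlinarith) (by linarith)
  calc (2:ℝ) ^ (-((n:ℝ)+σ)/2) * ρ ^ (-1-σ)
      = (2 * ρ^2) ^ (-((n:ℝ)+σ)/2) * ρ ^ (n-1) := by
        rw [Real.mul_rpow (by norm_num) (by positivity), mul_assoc, aux_pow_eq hn hρ0]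
    _ ≤ (1 + ρ^2) ^ (-((n:ℝ)+σ)/2) * ρ ^ (n-1) := by
        apply mul_le_mul_of_nonneg_right h1 (by positivity)

private lemma aux_integrable (n : ℕ) (hn : 1 ≤ n) {σ : ℝ} (hσ0 : 0 < σ) {c : ℝ} (hc : 0 < c) :
    IntegrableOn (fun ρ : ℝ => (c + ρ^2) ^ (-((n:ℝ)+σ)/2) * ρ ^ (n-1)) (Ioi 0) := by
  have hcont : Continuous (fun ρ : ℝ => (c + ρ^2) ^ (-((n:ℝ)+σ)/2) * ρ ^ (n-1)) := by
    exact ((continuous_const.add (continuous_pow 2)).rpow_const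
      (fun x => Or.inl (ne_of_gt (by have := sq_nonneg x; show 0 < c + x^2; linarith)))).mul (continuous_pow _)
  rw [show Ioi (0:ℝ) = Ioc 0 1 ∪ Ioi 1 from (Ioc_union_Ioi_eq_Ioi zero_le_one).symm]
  apply IntegrableOn.union
  · exact hcont.integrableOn_Ioc
  · apply Integrable.mono' (integrableOn_Ioi_rpow_of_lt (by linarith : -1-σ < -1) one_pos)
      hcont.aestronglyMeasurable
    filter_upwards [ae_restrict_mem measurableSet_Ioi] with ρ hρ
    have hρ1 : (1:ℝ) < ρ := hρ
    rw [Real.norm_eq_abs, abs_of_nonneg (mul_nonneg (Real.rpow_nonneg (by positivity) _)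
      (pow_nonneg (by linarith) _))]
    exact aux_le n hn hσ0 hc.le (by linarith)

/-- tail mass estimate for the Cauchy–Poisson kernel:
`∫_{|x| ≥ λ} P^σ_y(x) dx ≤ 2^{(n+σ)/2} (λ/y)^{-σ}`. Here `ω_n` is the surface area of the
unit sphere in `ℝⁿ`, `I(σ) = ω_n ∫₀^∞ (1+ρ²)^{-(n+σ)/2} ρ^{n-1} dρ` and
`P^σ_y(x) = I(σ)⁻¹ y^σ (y²+|x|²)^{-(n+σ)/2}`. -/
theorem stmt4 (n : ℕ) (hn : 1 ≤ n) (σ : ℝ) (hσ : σ ∈ Ioo (0:ℝ) 2)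
    (y : ℝ) (hy : 0 < y) (lam : ℝ) (hlam : 0 < lam)
    (ω : ℝ)
    (hω : ω = (n : ℝ) * (volume (Metric.ball (0 : EuclideanSpace ℝ (Fin n)) 1)).toReal)
    (I : ℝ) (hI : I = ω * ∫ ρ in Ioi (0:ℝ), (1 + ρ^2) ^ (-((n:ℝ) + σ)/2) * ρ^(n-1))
    (P : EuclideanSpace ℝ (Fin n) → ℝ)
    (hP : ∀ x, P x = I⁻¹ * y ^ σ * (y^2 + ‖x‖^2) ^ (-((n:ℝ) + σ)/2)) :
    (∫ x in {x : EuclideanSpace ℝ (Fin n) | lam ≤ ‖x‖}, P x)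
      ≤ (2:ℝ) ^ (((n:ℝ) + σ)/2) * (lam / y) ^ (-σ) := by
  obtain ⟨hσ0, hσ2⟩ := hσ
  have hns : (0:ℝ) < (n:ℝ) + σ := by positivity
  set ν : ℝ := -((n:ℝ)+σ)/2 with hν
  set A : ℝ := (2:ℝ) ^ (((n:ℝ)+σ)/2) with hA
  have hA0 : 0 < A := Real.rpow_pos_of_pos two_pos _
  have h2ν : (2:ℝ) ^ ν = A⁻¹ := by
    rw [hν, hA, show -((n:ℝ)+σ)/2 = -(((n:ℝ)+σ)/2) by ring, Real.rpow_neg (by norm_num)]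
  -- positivity of ω
  have hvol0 : 0 < (volume (Metric.ball (0 : EuclideanSpace ℝ (Fin n)) 1)).toReal := by
    haveI : Nonempty (Fin n) := Fin.pos_iff_nonempty.mp hn
    exact ENNReal.toReal_pos (ne_of_gt (Metric.measure_ball_pos _ _ one_pos))
      measure_ball_lt_top.ne
  have hn0 : (0:ℝ) < (n:ℝ) := by exact_mod_cast hn
  have hω0 : 0 < ω := by rw [hω]; exact mul_pos hn0 hvol0
  -- lower bound for I
  have hint1 : IntegrableOn (fun ρ : ℝ => (1 + ρ^2) ^ ν * ρ ^ (n-1)) (Ioi 0) :=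
    aux_integrable n hn hσ0 one_pos
  have hJlow : A⁻¹ / σ ≤ ∫ ρ in Ioi (0:ℝ), (1 + ρ^2) ^ ν * ρ^(n-1) := by
    have h1 : (∫ ρ in Ioi (1:ℝ), (2:ℝ)^ν * ρ ^ (-1-σ))
        ≤ ∫ ρ in Ioi (1:ℝ), (1 + ρ^2) ^ ν * ρ^(n-1) := by
      apply setIntegral_mono_on
      · exact ((integrableOn_Ioi_rpow_of_lt (by linarith : -1-σ < -1) one_pos).const_mul _)
      · exact hint1.mono_set (Ioi_subset_Ioi zero_le_one)
      · exact measurableSet_Ioi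
      · intro ρ hρ; exact aux_ge n hn hσ0 (le_of_lt hρ)
    have h2 : (∫ ρ in Ioi (1:ℝ), (2:ℝ)^ν * ρ ^ (-1-σ)) = A⁻¹ / σ := by
      rw [integral_const_mul, integral_Ioi_rpow_of_lt (by linarith : -1-σ < -1) one_pos,
        show (-1-σ+1 : ℝ) = -σ by ring, Real.one_rpow, h2ν]
      field_simp
    have h3 : (∫ ρ in Ioi (1:ℝ), (1 + ρ^2) ^ ν * ρ^(n-1))
        ≤ ∫ ρ in Ioi (0:ℝ), (1 + ρ^2) ^ ν * ρ^(n-1) := by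
      apply setIntegral_mono_set hint1
      · filter_upwards [ae_restrict_mem measurableSet_Ioi] with ρ hρ
        have : (0:ℝ) < ρ := hρ
        exact mul_nonneg (Real.rpow_nonneg (by positivity) _) (pow_nonneg this.le _)
      · exact (Ioi_subset_Ioi zero_le_one).eventuallyLE
    linarith
  have hIlow : ω * (A⁻¹ / σ) ≤ I := by
    rw [hI]; exact mul_le_mul_of_nonneg_left hJlow hω0.le
  have hI0 : 0 < I := lt_of_lt_of_le (by positivity) hIlow
  -- polar coordinates reduction
  haveI : Nontrivial (EuclideanSpace ℝ (Fin n)) :=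
    Module.nontrivial_of_finrank_pos (R := ℝ) (by rw [finrank_euclideanSpace_fin]; omega)
  set g : ℝ → ℝ := fun r => I⁻¹ * y ^ σ * (y^2 + r^2) ^ ν with hg
  have hS : MeasurableSet {x : EuclideanSpace ℝ (Fin n) | lam ≤ ‖x‖} :=
    measurableSet_le measurable_const measurable_norm
  have step1 : (∫ x in {x : EuclideanSpace ℝ (Fin n) | lam ≤ ‖x‖}, P x)
      = ∫ x : EuclideanSpace ℝ (Fin n), (Ici lam).indicator g ‖x‖ := by
    rw [← integral_indicator hS]
    congr 1; funext x
    by_cases h : lam ≤ ‖x‖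
    · simp only [Set.indicator_apply, mem_setOf_eq, mem_Ici, if_pos h, hP x, hg]
    · simp only [Set.indicator_apply, mem_setOf_eq, mem_Ici, if_neg h]
  have step2 := integral_fun_norm_addHaar
    (volume : Measure (EuclideanSpace ℝ (Fin n))) ((Ici lam).indicator g)
  rw [finrank_euclideanSpace_fin] at step2
  have step3 : (∫ r in Ioi (0:ℝ), r ^ (n-1) • (Ici lam).indicator g r)
      = I⁻¹ * y ^ σ * ∫ r in Ici lam, (y^2 + r^2) ^ ν * r ^ (n-1) := by
    have heq : ∀ r : ℝ, r ^ (n-1) • (Ici lam).indicator g r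
        = (Ici lam).indicator (fun r => I⁻¹ * y ^ σ * ((y^2 + r^2) ^ ν * r ^ (n-1))) r := by
      intro r
      by_cases h : r ∈ Ici lam
      · rw [indicator_of_mem h, indicator_of_mem h, hg, smul_eq_mul]; ring
      · rw [indicator_of_notMem h, indicator_of_notMem h, smul_zero]
    simp_rw [heq]
    have hset : Ioi (0:ℝ) ∩ Ici lam = Ici lam :=
      inter_eq_self_of_subset_right (fun r hr => lt_of_lt_of_le hlam hr)
    rw [setIntegral_indicator measurableSet_Ici, hset, integral_const_mul]
  -- bound the tail radial integral
  set K : ℝ := ∫ r in Ici lam, (y^2 + r^2) ^ ν * r ^ (n-1) with hK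
  have hK0 : 0 ≤ K := by
    apply setIntegral_nonneg measurableSet_Ici
    intro r hr
    have hr0 : (0:ℝ) < r := lt_of_lt_of_le hlam hr
    exact mul_nonneg (Real.rpow_nonneg (by positivity) _) (pow_nonneg hr0.le _)
  have hKle : K ≤ lam ^ (-σ) / σ := by
    rw [hK, integral_Ici_eq_integral_Ioi]
    have hmono : (∫ r in Ioi lam, (y^2 + r^2) ^ ν * r ^ (n-1))
        ≤ ∫ r in Ioi lam, r ^ (-1-σ) := by
      apply setIntegral_mono_on
      · exact (aux_integrable n hn hσ0 (by positivity : (0:ℝ) < y^2)).mono_set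
          (Ioi_subset_Ioi hlam.le)
      · exact integrableOn_Ioi_rpow_of_lt (by linarith : -1-σ < -1) hlam
      · exact measurableSet_Ioi
      · intro r hr; exact aux_le n hn hσ0 (by positivity) (lt_trans hlam hr)
    have hcomp : (∫ r in Ioi lam, r ^ (-1-σ)) = lam ^ (-σ) / σ := by
      rw [integral_Ioi_rpow_of_lt (by linarith : -1-σ < -1) hlam,
        show (-1-σ+1 : ℝ) = -σ by ring]
      field_simp
    linarith
  -- assemble
  have hLHS : (∫ x in {x : EuclideanSpace ℝ (Fin n) | lam ≤ ‖x‖}, P x)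
      = ω * (I⁻¹ * y ^ σ * K) := by
    rw [step1, step2, step3, nsmul_eq_mul, smul_eq_mul, hω, hK, measureReal_def]; ring
  have hfinal : ω * (I⁻¹ * y ^ σ * K) ≤ A * (lam / y) ^ (-σ) := by
    have hIinv : I⁻¹ ≤ (ω * (A⁻¹ / σ))⁻¹ := by
      exact inv_anti₀ (by positivity) hIlow
    have hIinv' : I⁻¹ ≤ σ * A / ω := by
      calc I⁻¹ ≤ (ω * (A⁻¹ / σ))⁻¹ := hIinv
        _ = σ * A / ω := by field_simp
    have hdiv : (lam / y) ^ (-σ) = lam ^ (-σ) * y ^ σ := by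
      rw [Real.div_rpow hlam.le hy.le, Real.rpow_neg hy.le]
      simp [div_eq_mul_inv, inv_inv]
    calc ω * (I⁻¹ * y ^ σ * K) ≤ ω * ((σ * A / ω) * y ^ σ * (lam ^ (-σ) / σ)) := by
          apply mul_le_mul_of_nonneg_left _ hω0.le
          apply mul_le_mul (mul_le_mul_of_nonneg_right hIinv' (by positivity)) hKle hK0
          positivity
      _ = A * (lam ^ (-σ) * y ^ σ) := by field_simp
      _ = A * (lam / y) ^ (-σ) := by rw [hdiv]
  linarith [hLHS ▸ hfinal]
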